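/- Let f : ℝ^n → ℝ be differentiable with gradient ∇f and μ-strongly convex with 0 < μ ≤ L, let γ > 0, 0 ≤ α < 1, δ ≥ 0, and let g̃ satisfy the composite noise condition with parameters α, δ. Fix z ∈ ℝ^n and set c = f(z) − (1/μ)·((1 + (1/4)(μ/(2L))^γ)(1+α)² + 2α²)·‖∇f(z)‖² − (1/μ)·(4(2L/μ)^γ + 3)·δ² and u = z − (2/μ)·g̃(z). Then for every x ∈ ℝ^n: c + (μ/4)·‖x − u‖² ≤ f(x). -/
import Mathlib
set_option maxHeartbeats 1000000


open scoped InnerProductSpace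

/-- A quadratic global lower bound on a strongly convex function constructed from a
composite-noise gradient estimate at a fixed point. -/
theorem quadratic_lower_bound {n : ℕ} (f : EuclideanSpace ℝ (Fin n) → ℝ)
    (f' g : EuclideanSpace ℝ (Fin n) → EuclideanSpace ℝ (Fin n))
    (hgrad : ∀ x, HasGradientAt f (f' x) x)
    (μ L : ℝ) (hμ : 0 < μ) (hμL : μ ≤ L)
    (hsc : ∀ x y : EuclideanSpace ℝ (Fin n),
      f x + ⟪f' x, y - x⟫_ℝ + μ / 2 * ‖x - y‖ ^ 2 ≤ f y)
    (γ : ℝ) (hγ : 0 < γ)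
    (α δ : ℝ) (hα0 : 0 ≤ α) (hα1 : α < 1) (hδ : 0 ≤ δ)
    (hnoise : ∀ x, ‖g x - f' x‖ ≤ α * ‖f' x‖ + δ)
    (z : EuclideanSpace ℝ (Fin n)) (c : ℝ) (u : EuclideanSpace ℝ (Fin n))
    (hc : c = f z
      - (1 / μ) * ((1 + (1 / 4) * (μ / (2 * L)) ^ γ) * (1 + α) ^ 2 + 2 * α ^ 2)
          * ‖f' z‖ ^ 2
      - (1 / μ) * (4 * (2 * L / μ) ^ γ + 3) * δ ^ 2)
    (hu : u = z - (2 / μ) • g z) :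
    ∀ x : EuclideanSpace ℝ (Fin n), c + (μ / 4) * ‖x - u‖ ^ 2 ≤ f x := by
  intro x
  have hμ' : μ ≠ 0 := ne_of_gt hμ
  have hLpos : 0 < L := lt_of_lt_of_le hμ hμL
  set d : EuclideanSpace ℝ (Fin n) := x - z with hd
  set fz : EuclideanSpace ℝ (Fin n) := f' z with hfz
  set gz : EuclideanSpace ℝ (Fin n) := g z with hgz
  set e : EuclideanSpace ℝ (Fin n) := gz - fz with he
  set t : ℝ := (μ / (2 * L)) ^ γ with htdef
  set s : ℝ := (2 * L / μ) ^ γ with hsdef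
  have htpos : 0 < t := Real.rpow_pos_of_pos (by positivity) γ
  have hspos : 0 < s := Real.rpow_pos_of_pos (by positivity) γ
  have hst : s * t = 1 := by
    rw [hsdef, htdef, ← Real.mul_rpow (by positivity) (by positivity),
      show (2 * L / μ) * (μ / (2 * L)) = 1 by field_simp]
    exact Real.one_rpow γ
  have hE : ‖e‖ ≤ α * ‖fz‖ + δ := hnoise z
  have hCS : ⟪d, e⟫_ℝ ≤ ‖d‖ * ‖e‖ := real_inner_le_norm d e
  have hG : ‖gz‖ ≤ ‖fz‖ + ‖e‖ := by
    have h : gz = fz + e := by rw [he]; abel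
    rw [h]; exact norm_add_le _ _
  -- scalar pieces
  have p1 : μ * ⟪d, e⟫_ℝ ≤ μ ^ 2 / 4 * ‖d‖ ^ 2 + ‖e‖ ^ 2 := by
    nlinarith [hCS, hμ, sq_nonneg (μ / 2 * ‖d‖ - ‖e‖), norm_nonneg d, norm_nonneg e]
  have p2 : ‖e‖ ^ 2 ≤ 2 * α ^ 2 * ‖fz‖ ^ 2 + 2 * δ ^ 2 := by
    nlinarith [hE, norm_nonneg e, sq_nonneg (α * ‖fz‖ - δ),
      mul_nonneg hα0 (norm_nonneg fz), hδ]
  have haux : 2 * t * ((1 + α) * ‖fz‖) * δ ≤ t ^ 2 / 4 * ((1 + α) * ‖fz‖) ^ 2 + 4 * δ ^ 2 := by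
    nlinarith [sq_nonneg (t * ((1 + α) * ‖fz‖) / 2 - 2 * δ)]
  have hst2 : s * t ^ 2 = t := by
    rw [pow_two, ← mul_assoc, hst, one_mul]
  have haux2 : 2 * ((1 + α) * ‖fz‖) * δ ≤ t / 4 * ((1 + α) * ‖fz‖) ^ 2 + 4 * s * δ ^ 2 := by
    have h := mul_le_mul_of_nonneg_left haux hspos.le
    calc 2 * ((1 + α) * ‖fz‖) * δ = s * t * (2 * ((1 + α) * ‖fz‖) * δ) := by
          rw [hst]; ring
      _ = s * (2 * t * ((1 + α) * ‖fz‖) * δ) := by ring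
      _ ≤ s * (t ^ 2 / 4 * ((1 + α) * ‖fz‖) ^ 2 + 4 * δ ^ 2) := h
      _ = (s * t ^ 2) / 4 * ((1 + α) * ‖fz‖) ^ 2 + 4 * s * δ ^ 2 := by ring
      _ = t / 4 * ((1 + α) * ‖fz‖) ^ 2 + 4 * s * δ ^ 2 := by rw [hst2]
  have p3 : ‖gz‖ ^ 2 ≤ (1 + t / 4) * (1 + α) ^ 2 * ‖fz‖ ^ 2 + (4 * s + 1) * δ ^ 2 := by
    have hGb : ‖gz‖ ≤ (1 + α) * ‖fz‖ + δ := by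
      have := hE; nlinarith [hG, norm_nonneg fz]
    nlinarith [hGb, norm_nonneg gz, mul_nonneg (mul_nonneg (by linarith : (0:ℝ) ≤ 1 + α)
      (norm_nonneg fz)) hδ, haux2]
  have keyfull : μ * ⟪d, e⟫_ℝ + ‖gz‖ ^ 2 ≤ μ ^ 2 / 4 * ‖d‖ ^ 2
      + ((1 + (1 / 4) * t) * (1 + α) ^ 2 + 2 * α ^ 2) * ‖fz‖ ^ 2
      + (4 * s + 3) * δ ^ 2 := by
    nlinarith [p1, p2, p3]
  -- geometric identities
  have hxu : x - u = d + (2 / μ) • gz := by rw [hu, hd]; abel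
  have hexp : ‖x - u‖ ^ 2 = ‖d‖ ^ 2 + (4 / μ) * ⟪d, gz⟫_ℝ + (4 / μ ^ 2) * ‖gz‖ ^ 2 := by
    rw [hxu, norm_add_sq_real, real_inner_smul_right, norm_smul, Real.norm_eq_abs,
      abs_of_pos (by positivity : (0:ℝ) < 2 / μ)]
    field_simp
    ring
  have hinnsplit : ⟪d, gz⟫_ℝ = ⟪fz, d⟫_ℝ + ⟪d, e⟫_ℝ := by
    have h1 : ⟪d, e⟫_ℝ = ⟪d, gz⟫_ℝ - ⟪d, fz⟫_ℝ := by rw [he, inner_sub_right]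
    have h2 : ⟪fz, d⟫_ℝ = ⟪d, fz⟫_ℝ := real_inner_comm _ _
    linarith
  have hsc' := hsc z x
  have hzx : ‖z - x‖ = ‖d‖ := by rw [hd, norm_sub_rev]
  rw [hzx] at hsc'
  have step : c + μ / 4 * ‖x - u‖ ^ 2 ≤ f z + ⟪fz, x - z⟫_ℝ + μ / 2 * ‖d‖ ^ 2 := by
    have h : μ * (f z + ⟪fz, x - z⟫_ℝ + μ / 2 * ‖d‖ ^ 2) - μ * (c + μ / 4 * ‖x - u‖ ^ 2)
        = (μ ^ 2 / 4 * ‖d‖ ^ 2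
          + ((1 + (1 / 4) * t) * (1 + α) ^ 2 + 2 * α ^ 2) * ‖fz‖ ^ 2
          + (4 * s + 3) * δ ^ 2) - (μ * ⟪d, e⟫_ℝ + ‖gz‖ ^ 2) := by
      rw [hc, hexp, hinnsplit]
      have : ⟪fz, x - z⟫_ℝ = ⟪fz, d⟫_ℝ := by rw [hd]
      rw [this]
      field_simp
      ring
    have h2 : μ * (c + μ / 4 * ‖x - u‖ ^ 2) ≤ μ * (f z + ⟪fz, x - z⟫_ℝ + μ / 2 * ‖d‖ ^ 2) := by
      linarith [keyfull, h]
    exact le_of_mul_le_mul_left h2 hμ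
  calc c + μ / 4 * ‖x - u‖ ^ 2 ≤ f z + ⟪fz, x - z⟫_ℝ + μ / 2 * ‖d‖ ^ 2 := step
    _ ≤ f x := hsc'
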